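/- Let K be a field of characteristic zero, A a unital K-algebra (not necessarily commutative), and D a locally finite K-derivation of A. If the identity element 1_A lies in the image of D, then D is surjective. -/

import Mathlib

open Polynomial

section Aux

variable {K : Type*} [Field K] [CharZero K]
    {A : Type*} [Ring A] [Algebra K A]

lemma aux_pow_rule (D : A →ₗ[K] A)
    (hder : ∀ a b : A, D (a * b) = D a * b + a * D b)
    (s : A) (hs : D s = 1) (k : ℕ) :
    D (s ^ (k + 1)) = (((k : K) + 1)) • s ^ k := by
  induction k with
  | zero => simp [hs]
  | succ k ih =>
    rw [pow_succ' s (k + 1), hder, hs, ih, one_mul, mul_smul_comm, ← pow_succ' s k]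
    rw [← one_smul K (s ^ (k + 1))]
    rw [smul_smul, ← add_smul]
    push_cast
    rw [one_smul]
    ring_nf

lemma aux_taylor (D : A →ₗ[K] A)
    (hder : ∀ a b : A, D (a * b) = D a * b + a * D b)
    (s : A) (hs : D s = 1) (n : ℕ) (x : A) (hx : (D ^ n) x = 0) :
    x ∈ LinearMap.range D := by
  set F : ℕ → A := fun i => ((-1 : K) ^ i / (Nat.factorial i : K)) • (s ^ i * (D ^ i) x)
    with hF
  refine ⟨∑ i ∈ Finset.range n,
    ((-1 : K) ^ i / (Nat.factorial (i + 1) : K)) • (s ^ (i + 1) * (D ^ i) x), ?_⟩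
  rw [map_sum]
  have key : ∀ i,
      D (((-1 : K) ^ i / (Nat.factorial (i + 1) : K)) • (s ^ (i + 1) * (D ^ i) x))
        = F i - F (i + 1) := by
    intro i
    have hfac : (Nat.factorial i : K) ≠ 0 := Nat.cast_ne_zero.mpr (Nat.factorial_ne_zero i)
    have hsucc : ((i : K) + 1) ≠ 0 := by
      have : ((i + 1 : ℕ) : K) ≠ 0 := Nat.cast_ne_zero.mpr (Nat.succ_ne_zero i)
      push_cast at this; exact this
    rw [map_smul, hder, aux_pow_rule D hder s hs, smul_mul_assoc, smul_add, smul_smul]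
    have hDpow : D ((D ^ i) x) = (D ^ (i + 1)) x := by
      rw [pow_succ']; rfl
    rw [hDpow, hF]
    have c1 : (-1 : K) ^ i / (Nat.factorial (i + 1) : K) * ((i : K) + 1)
        = (-1 : K) ^ i / (Nat.factorial i : K) := by
      rw [Nat.factorial_succ]
      push_cast
      field_simp
    have c2 : ((-1 : K) ^ i / (Nat.factorial (i + 1) : K))
        = -((-1 : K) ^ (i + 1) / (Nat.factorial (i + 1) : K)) := by
      rw [pow_succ]
      ring
    rw [c1, sub_eq_add_neg, ← neg_smul, ← c2]
  rw [Finset.sum_congr rfl fun i _ => key i, Finset.sum_range_sub' F n, hF]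
  simp [hx]

omit [CharZero K] in
lemma aux_ann (D : A →ₗ[K] A)
    (hLF : ∀ a : A,
      FiniteDimensional K (Submodule.span K (Set.range fun i : ℕ => (D ^ i) a)))
    (a : A) : ∃ p : K[X], p ≠ 0 ∧ (aeval D p) a = 0 := by
  have h := hLF a
  set V := Submodule.span K (Set.range fun i : ℕ => (D ^ i) a) with hV
  have hmem : ∀ i : ℕ, (D ^ i) a ∈ V := fun i => Submodule.subset_span ⟨i, rfl⟩
  have hdep := Module.Finite.not_linearIndependent_of_infinite (R := K)
    (fun i : ℕ => (⟨(D ^ i) a, hmem i⟩ : V))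
  rw [linearIndependent_iff] at hdep
  push_neg at hdep
  obtain ⟨l, hl0, hlne⟩ := hdep
  refine ⟨⟨⟨l⟩⟩, by simpa using hlne, ?_⟩
  have hl0' : Finsupp.linearCombination K (fun i : ℕ => (D ^ i) a) l = 0 := by
    have := congrArg (V.subtype) hl0
    rwa [Finsupp.apply_linearCombination, map_zero] at this
  rw [Finsupp.linearCombination_apply, Finsupp.sum] at hl0'
  rw [aeval_def, eval₂_eq_sum, Polynomial.sum_def, support_ofFinsupp]
  rw [← hl0']
  rw [LinearMap.coe_sum, Finset.sum_apply]
  refine Finset.sum_congr rfl fun i _ => ?_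
  rw [Module.End.mul_apply, Module.algebraMap_end_apply]
  rfl

end Aux

/-- Let `K` be a field of characteristic zero, `A` a unital `K`-algebra
(not necessarily commutative), and `D` a locally finite `K`-derivation of `A`.  If the
identity element `1` lies in the image of `D`, then `D` is surjective. -/
theorem surjective_of_one_mem_image_locally_finite_derivation
    {K : Type*} [Field K] [CharZero K]
    {A : Type*} [Ring A] [Algebra K A]
    (D : A →ₗ[K] A)
    (hder : ∀ a b : A, D (a * b) = D a * b + a * D b)
    (hLF : ∀ a : A,
      FiniteDimensional K (Submodule.span K (Set.range fun i : ℕ => (D ^ i) a)))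
    (h1 : (1 : A) ∈ LinearMap.range D) :
    Function.Surjective D := by
  obtain ⟨s, hs⟩ := h1
  intro a
  obtain ⟨p, hp0, hpa⟩ := aux_ann D hLF a
  by_cases hc : p.coeff 0 = 0
  · -- X divides p : split via Bezout
    obtain ⟨q, hq, hq'⟩ := p.exists_eq_pow_rootMultiplicity_mul_and_not_dvd hp0 0
    rw [map_zero, sub_zero] at hq hq'
    set n := p.rootMultiplicity 0 with hn
    have hnne : n ≠ 0 := by
      intro h
      rw [h, pow_zero, one_mul] at hq
      exact hq' (X_dvd_iff.mpr (by rw [← hq]; exact hc))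
    have hcop : IsCoprime ((X : K[X]) ^ n) q :=
      (Polynomial.irreducible_X.coprime_iff_not_dvd.mpr hq').pow_left
    obtain ⟨f, g, hfg⟩ := hcop
    have ha : a = (aeval D (f * X ^ n)) a + (aeval D (g * q)) a := by
      rw [← LinearMap.add_apply, ← map_add, hfg, map_one, Module.End.one_apply]
    -- first summand in range
    have h1' : (aeval D (f * X ^ n)) a ∈ LinearMap.range D := by
      obtain ⟨m, hm⟩ : ∃ m, n = m + 1 := ⟨n - 1, (Nat.succ_pred_eq_of_ne_zero hnne).symm⟩
      have hfx : f * X ^ n = X * (f * X ^ m) := by rw [hm]; ring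
      rw [hfx, map_mul, aeval_X, Module.End.mul_apply]
      exact ⟨_, rfl⟩
    -- second summand is killed by D ^ n
    have h2' : (D ^ n) ((aeval D (g * q)) a) = 0 := by
      have e1 : (D ^ n) ((aeval D (g * q)) a) = (aeval D (X ^ n * (g * q))) a := by
        conv_rhs => rw [map_mul, map_pow, aeval_X, Module.End.mul_apply]
      rw [e1]
      have e2 : (X : K[X]) ^ n * (g * q) = g * (X ^ n * q) := by ring
      rw [e2, ← hq, map_mul, Module.End.mul_apply, hpa, map_zero]
    have h2 : (aeval D (g * q)) a ∈ LinearMap.range D :=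
      aux_taylor D hder s hs n _ h2'
    obtain ⟨b, hb⟩ := h1'
    obtain ⟨c, hcb⟩ := h2
    exact ⟨b + c, by rw [map_add, hb, hcb, ← ha]⟩
  · -- constant coefficient nonzero : direct inversion
    have hp' : X * p.divX + C (p.coeff 0) = p := X_mul_divX_add p
    have key : D ((aeval D p.divX) a) + p.coeff 0 • a = 0 := by
      have := hpa
      rw [← hp', map_add, map_mul, aeval_X, aeval_C, LinearMap.add_apply,
        Module.End.mul_apply, Module.algebraMap_end_apply] at this
      exact this
    refine ⟨(-(p.coeff 0)⁻¹) • (aeval D p.divX) a, ?_⟩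
    rw [map_smul]
    have : D ((aeval D p.divX) a) = -(p.coeff 0 • a) := by
      rw [eq_neg_iff_add_eq_zero]; exact key
    rw [this, smul_neg, neg_smul, neg_neg, smul_smul, inv_mul_cancel₀ hc, one_smul]
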